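/- Let (X, F) be a measurable space, μ : F → [0,∞] a monotone measure, p, q ≥ 1 and r, s > 0. Let f, g, h : X → [0,∞) be measurable functions such that f, g are comonotone and f, h are comonotone. Let A ∈ F with 0 < μ(A) < ∞ and suppose f is integrable on A, i.e. (C)∫_A f dμ < ∞. Then ((C)∫_A f dμ) · ((C)∫_A g dμ)^{r/(r+s)} · ((C)∫_A h dμ)^{s/(r+s)} ≤ μ(A)^d · ((C)∫_A f^p g^p dμ)^{r/(p(r+s))} · ((C)∫_A f^q h^q dμ)^{s/(q(r+s))}, where d = 2 − (1/(r+s))·(r/p + s/q). -/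

import Mathlib

open scoped ENNReal NNReal

/-- The Choquet integral of `f` on `A` with respect to the monotone set
function `μ`: `(C)∫_A f dμ = ∫_0^∞ μ(A ∩ {f ≥ t}) dt`. -/
noncomputable def choquet {X : Type*} (μ : Set X → ℝ≥0∞) (f : X → ℝ≥0∞)
    (A : Set X) : ℝ≥0∞ :=
  ∫⁻ t in Set.Ioi (0:ℝ), μ (A ∩ {x | ENNReal.ofReal t ≤ f x})

/-- `f, g : X → [0,∞)` are comonotone: `(f(x) − f(y))(g(x) − g(y)) ≥ 0`. -/
def Comonotone {X : Type*} (f g : X → ℝ≥0) : Prop :=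
  ∀ x y, 0 ≤ ((f x : ℝ) - (f y : ℝ)) * ((g x : ℝ) - (g y : ℝ))

open MeasureTheory Set

section Aux

/-- Binary rearrangement inequality in `ℝ≥0∞`. -/
lemma enn_rearrange {a b c d : ℝ≥0∞} (hab : a ≤ b) (hcd : c ≤ d) :
    a * d + b * c ≤ a * c + b * d := by
  obtain ⟨e, rfl⟩ : ∃ e, b = a + e := ⟨b - a, (add_tsub_cancel_of_le hab).symm⟩
  obtain ⟨f, rfl⟩ : ∃ f, d = c + f := ⟨d - c, (add_tsub_cancel_of_le hcd).symm⟩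
  have : a * c + (a + e) * (c + f) = (a * (c + f) + (a + e) * c) + e * f := by ring
  rw [this]
  exact le_self_add

/-- A downward-closed subset of `(0,∞)` has volume `⨆ t : S, ofReal t`. -/
lemma vol_iSup {S : Set ℝ} (hpos : ∀ t ∈ S, (0:ℝ) < t)
    (hdc : ∀ t ∈ S, ∀ u : ℝ, 0 < u → u < t → u ∈ S) :
    volume S = ⨆ t : S, ENNReal.ofReal (t : ℝ) := by
  apply le_antisymm
  · set e := ⨆ t : S, ENNReal.ofReal (t : ℝ) with he
    rcases eq_or_ne e ⊤ with h | h
    · rw [h]; exact le_top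
    · have hsub : S ⊆ Set.Ioc 0 e.toReal := by
        intro t ht
        refine ⟨hpos t ht, ?_⟩
        have hle : ENNReal.ofReal t ≤ e :=
          le_iSup (fun t : S => ENNReal.ofReal (t : ℝ)) ⟨t, ht⟩
        exact (ENNReal.ofReal_le_iff_le_toReal h).mp hle
      calc volume S ≤ volume (Set.Ioc 0 e.toReal) := measure_mono hsub
        _ = ENNReal.ofReal e.toReal := by rw [Real.volume_Ioc, sub_zero]
        _ = e := ENNReal.ofReal_toReal h
  · apply iSup_le
    rintro ⟨t, ht⟩
    have hsub : Set.Ioo 0 t ⊆ S := fun u hu => hdc t ht u hu.1 hu.2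
    calc ENNReal.ofReal t = volume (Set.Ioo 0 t) := by rw [Real.volume_Ioo, sub_zero]
      _ ≤ volume S := measure_mono hsub

/-- Layer-cake representation of a lintegral on `(0,∞)`. -/
lemma layercake {w : ℝ → ℝ≥0∞} (hw : Measurable w) :
    ∫⁻ t in Set.Ioi (0:ℝ), w t =
      ∫⁻ l in Set.Ioi (0:ℝ), volume ({t | ENNReal.ofReal l < w t} ∩ Set.Ioi 0) := by
  have hS : ∀ c : ℝ≥0∞, MeasurableSet {l : ℝ | ENNReal.ofReal l < c} := fun c =>
    measurableSet_lt ENNReal.measurable_ofReal measurable_const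
  have hS' : ∀ l : ℝ, MeasurableSet {t : ℝ | ENNReal.ofReal l < w t} := fun l =>
    measurableSet_lt measurable_const hw
  have key : ∀ c : ℝ≥0∞, volume ({l : ℝ | ENNReal.ofReal l < c} ∩ Set.Ioi 0) = c := by
    intro c
    rcases eq_or_ne c ⊤ with rfl | hc
    · have h1 : {l : ℝ | ENNReal.ofReal l < ⊤} ∩ Set.Ioi 0 = Set.Ioi 0 := by
        ext l; simp [ENNReal.ofReal_lt_top]
      rw [h1, Real.volume_Ioi]
    · have h1 : {l : ℝ | ENNReal.ofReal l < c} ∩ Set.Ioi 0 = Set.Ioo 0 c.toReal := by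
        ext l
        simp only [Set.mem_inter_iff, Set.mem_setOf_eq, Set.mem_Ioi, Set.mem_Ioo]
        constructor
        · rintro ⟨h1, h2⟩; exact ⟨h2, (ENNReal.ofReal_lt_iff_lt_toReal h2.le hc).mp h1⟩
        · rintro ⟨h1, h2⟩; exact ⟨(ENNReal.ofReal_lt_iff_lt_toReal h1.le hc).mpr h2, h1⟩
      rw [h1, Real.volume_Ioo, sub_zero, ENNReal.ofReal_toReal hc]
  set ν := volume.restrict (Set.Ioi (0:ℝ)) with hν
  set F : ℝ → ℝ → ℝ≥0∞ := fun t l =>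
    ({z : ℝ × ℝ | ENNReal.ofReal z.2 < w z.1}.indicator (fun _ => (1:ℝ≥0∞)) (t, l)) with hF
  have hprodset : MeasurableSet {z : ℝ × ℝ | ENNReal.ofReal z.2 < w z.1} :=
    measurableSet_lt (ENNReal.measurable_ofReal.comp measurable_snd) (hw.comp measurable_fst)
  have hmeas : Measurable (Function.uncurry F) :=
    measurable_const.indicator hprodset
  have inner1 : ∀ t, ∫⁻ l, F t l ∂ν = w t := by
    intro t
    have hfun : (fun l => F t l)
        = {l : ℝ | ENNReal.ofReal l < w t}.indicator (fun _ => (1:ℝ≥0∞)) := by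
      ext l
      by_cases h : ENNReal.ofReal l < w t <;>
        simp [hF, Set.indicator_apply, h]
    rw [hfun, lintegral_indicator (hS _), setLIntegral_one, hν,
      Measure.restrict_apply (hS _), key]
  have inner2 : ∀ l, ∫⁻ t, F t l ∂ν = volume ({t | ENNReal.ofReal l < w t} ∩ Set.Ioi 0) := by
    intro l
    have hfun : (fun t => F t l)
        = {t : ℝ | ENNReal.ofReal l < w t}.indicator (fun _ => (1:ℝ≥0∞)) := by
      ext t
      by_cases h : ENNReal.ofReal l < w t <;>
        simp [hF, Set.indicator_apply, h]
    rw [hfun, lintegral_indicator (hS' _), setLIntegral_one, hν,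
      Measure.restrict_apply (hS' _)]
  calc ∫⁻ t, w t ∂ν = ∫⁻ t, ∫⁻ l, F t l ∂ν ∂ν := (lintegral_congr inner1).symm
    _ = ∫⁻ l, ∫⁻ t, F t l ∂ν ∂ν := lintegral_lintegral_swap hmeas.aemeasurable
    _ = ∫⁻ l, volume ({t | ENNReal.ofReal l < w t} ∩ Set.Ioi 0) ∂ν := lintegral_congr inner2

/-- Restriction of the integral to the support interval. -/
lemma lintegral_Ioi_of_support {m : ℝ} (hm : 0 < m) {α : ℝ → ℝ≥0∞}
    (h0 : ∀ l, m ≤ l → α l = 0) :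
    ∫⁻ l in Set.Ioi (0:ℝ), α l = ∫⁻ l in Set.Ioo 0 m, α l := by
  rw [← Set.Ioo_union_Ici_eq_Ioi hm, lintegral_union measurableSet_Ici
    (Set.disjoint_left.mpr fun l hl hl' => (show l < m from hl.2).not_ge hl')]
  have h1 : ∫⁻ l in Set.Ici m, α l = 0 := by
    rw [setLIntegral_congr_fun measurableSet_Ici (fun l hl => h0 l hl),
      lintegral_zero]
  rw [h1, add_zero]

/-- Chebyshev's integral inequality for monovarying functions. -/
lemma cheb_core {ν : Measure ℝ} {α β : ℝ → ℝ≥0∞}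
    (hα : Measurable α) (hβ : Measurable β)
    (hmono : ∀ x y, α x * β y + α y * β x ≤ α x * β x + α y * β y) :
    (∫⁻ x, α x ∂ν) * (∫⁻ x, β x ∂ν) ≤ ν Set.univ * ∫⁻ x, α x * β x ∂ν := by
  set Iα := ∫⁻ x, α x ∂ν
  set Iβ := ∫⁻ x, β x ∂ν
  set Iαβ := ∫⁻ x, α x * β x ∂ν
  set M := ν Set.univ
  have E1 : ∫⁻ x, ∫⁻ y, (α x * β y + α y * β x) ∂ν ∂ν = Iα * Iβ + Iα * Iβ := by
    have inner : ∀ x, ∫⁻ y, (α x * β y + α y * β x) ∂ν = α x * Iβ + Iα * β x := by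
      intro x
      rw [lintegral_add_left (hβ.const_mul _), lintegral_const_mul _ hβ,
        lintegral_mul_const _ hα]
    rw [lintegral_congr inner, lintegral_add_left (hα.mul_const _),
      lintegral_mul_const _ hα, lintegral_const_mul _ hβ]
  have E2 : ∫⁻ x, ∫⁻ y, (α x * β x + α y * β y) ∂ν ∂ν = Iαβ * M + Iαβ * M := by
    have inner : ∀ x, ∫⁻ y, (α x * β x + α y * β y) ∂ν = α x * β x * M + Iαβ := by
      intro x
      rw [lintegral_add_left measurable_const, lintegral_const]
    rw [lintegral_congr inner, lintegral_add_left ((show Measurable fun a => α a * β a from hα.mul hβ).mul_const _),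
      lintegral_mul_const _ (show Measurable fun a => α a * β a from hα.mul hβ), lintegral_const]
  have hbig : Iα * Iβ + Iα * Iβ ≤ Iαβ * M + Iαβ * M := by
    have h : (∫⁻ x, ∫⁻ y, (α x * β y + α y * β x) ∂ν ∂ν)
        ≤ ∫⁻ x, ∫⁻ y, (α x * β x + α y * β y) ∂ν ∂ν :=
      lintegral_mono fun x => lintegral_mono fun y => hmono x y
    rw [E1, E2] at h
    exact h
  have hle : Iα * Iβ ≤ Iαβ * M := by
    rcases eq_or_ne (Iαβ * M) ⊤ with h | h
    · rw [h]; exact le_top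
    · rw [← two_mul, ← two_mul] at hbig
      exact (ENNReal.mul_le_mul_iff_right (a := 2) (by norm_num) (by norm_num)).mp hbig
  exact hle.trans_eq (mul_comm _ _)

end Aux

section Choquet

variable {X : Type*} [MeasurableSpace X]

/-- Chebyshev's inequality for the Choquet integral w.r.t. a monotone measure,
for functions whose level sets form a chain. -/
lemma choquet_cheb (μ : Set X → ℝ≥0∞)
    (hμmono : ∀ A B : Set X, MeasurableSet A → MeasurableSet B → A ⊆ B → μ A ≤ μ B)
    (φ ψ : X → ℝ≥0∞) (hφ : Measurable φ) (hψ : Measurable ψ)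
    (A : Set X) (hA : MeasurableSet A) (hA0 : 0 < μ A) (hAfin : μ A < ⊤)
    (hchain : ∀ a b : ℝ≥0∞, (A ∩ {x | a ≤ φ x} ⊆ A ∩ {x | b ≤ ψ x}) ∨
      (A ∩ {x | b ≤ ψ x} ⊆ A ∩ {x | a ≤ φ x})) :
    choquet μ φ A * choquet μ ψ A ≤ μ A * choquet μ (fun x => φ x * ψ x) A := by
  set m := (μ A).toReal with hm
  have hm0 : 0 < m := ENNReal.toReal_pos hA0.ne' hAfin.ne
  have hmA : ENNReal.ofReal m = μ A := ENNReal.ofReal_toReal hAfin.ne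
  set wF : ℝ → ℝ≥0∞ := fun t => μ (A ∩ {x | ENNReal.ofReal t ≤ φ x}) with hwF
  set wG : ℝ → ℝ≥0∞ := fun t => μ (A ∩ {x | ENNReal.ofReal t ≤ ψ x}) with hwG
  set wH : ℝ → ℝ≥0∞ := fun t => μ (A ∩ {x | ENNReal.ofReal t ≤ φ x * ψ x}) with hwH
  have hBφ : ∀ c : ℝ≥0∞, MeasurableSet (A ∩ {x | c ≤ φ x}) := fun c =>
    hA.inter (measurableSet_le measurable_const hφ)
  have hBψ : ∀ c : ℝ≥0∞, MeasurableSet (A ∩ {x | c ≤ ψ x}) := fun c =>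
    hA.inter (measurableSet_le measurable_const hψ)
  have hBφψ : ∀ c : ℝ≥0∞, MeasurableSet (A ∩ {x | c ≤ φ x * ψ x}) := fun c =>
    hA.inter (measurableSet_le measurable_const (hφ.mul hψ))
  have hFanti : Antitone wF := fun t1 t2 h =>
    hμmono _ _ (hBφ _) (hBφ _) (Set.inter_subset_inter_right _ fun x hx =>
      le_trans (ENNReal.ofReal_le_ofReal h) hx)
  have hGanti : Antitone wG := fun t1 t2 h =>
    hμmono _ _ (hBψ _) (hBψ _) (Set.inter_subset_inter_right _ fun x hx =>
      le_trans (ENNReal.ofReal_le_ofReal h) hx)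
  have hHanti : Antitone wH := fun t1 t2 h =>
    hμmono _ _ (hBφψ _) (hBφψ _) (Set.inter_subset_inter_right _ fun x hx =>
      le_trans (ENNReal.ofReal_le_ofReal h) hx)
  have hFle : ∀ t, wF t ≤ μ A := fun t => hμmono _ _ (hBφ _) hA Set.inter_subset_left
  have hGle : ∀ t, wG t ≤ μ A := fun t => hμmono _ _ (hBψ _) hA Set.inter_subset_left
  set SF : ℝ → Set ℝ := fun l => {t | ENNReal.ofReal l < wF t} ∩ Set.Ioi 0 with hSF
  set SG : ℝ → Set ℝ := fun l => {t | ENNReal.ofReal l < wG t} ∩ Set.Ioi 0 with hSG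
  set SH : ℝ → Set ℝ := fun l => {t | ENNReal.ofReal l < wH t} ∩ Set.Ioi 0 with hSH
  set α : ℝ → ℝ≥0∞ := fun l => volume (SF l) with hαdef
  set β : ℝ → ℝ≥0∞ := fun l => volume (SG l) with hβdef
  set γ : ℝ → ℝ≥0∞ := fun l => volume (SH l) with hγdef
  have hSFdc : ∀ l, ∀ t ∈ SF l, ∀ u : ℝ, 0 < u → u < t → u ∈ SF l :=
    fun l t ht u hu0 hut => ⟨lt_of_lt_of_le ht.1 (hFanti hut.le), hu0⟩
  have hSGdc : ∀ l, ∀ t ∈ SG l, ∀ u : ℝ, 0 < u → u < t → u ∈ SG l :=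
    fun l t ht u hu0 hut => ⟨lt_of_lt_of_le ht.1 (hGanti hut.le), hu0⟩
  have hSHdc : ∀ l, ∀ t ∈ SH l, ∀ u : ℝ, 0 < u → u < t → u ∈ SH l :=
    fun l t ht u hu0 hut => ⟨lt_of_lt_of_le ht.1 (hHanti hut.le), hu0⟩
  have hαanti : Antitone α := fun l1 l2 h =>
    measure_mono fun t ht => ⟨lt_of_le_of_lt (ENNReal.ofReal_le_ofReal h) ht.1, ht.2⟩
  have hβanti : Antitone β := fun l1 l2 h =>
    measure_mono fun t ht => ⟨lt_of_le_of_lt (ENNReal.ofReal_le_ofReal h) ht.1, ht.2⟩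
  have hαm : Measurable α := hαanti.measurable
  have hβm : Measurable β := hβanti.measurable
  have hαsupp : ∀ l, m ≤ l → α l = 0 := by
    intro l hl
    have hμle : μ A ≤ ENNReal.ofReal l := by rw [← hmA]; exact ENNReal.ofReal_le_ofReal hl
    have hempty : SF l = ∅ := Set.eq_empty_of_forall_notMem fun t ht =>
      ht.1.not_ge ((hFle t).trans hμle)
    show volume (SF l) = 0
    rw [hempty, measure_empty]
  have hβsupp : ∀ l, m ≤ l → β l = 0 := by
    intro l hl
    have hμle : μ A ≤ ENNReal.ofReal l := by rw [← hmA]; exact ENNReal.ofReal_le_ofReal hl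
    have hempty : SG l = ∅ := Set.eq_empty_of_forall_notMem fun t ht =>
      ht.1.not_ge ((hGle t).trans hμle)
    show volume (SG l) = 0
    rw [hempty, measure_empty]
  have hkey : ∀ l, α l * β l ≤ γ l := by
    intro l
    have hSHvol : γ l = ⨆ v : SH l, ENNReal.ofReal (v : ℝ) :=
      vol_iSup (fun t ht => ht.2) (hSHdc l)
    rw [show α l = ⨆ t : SF l, ENNReal.ofReal (t : ℝ) from
        vol_iSup (fun t ht => ht.2) (hSFdc l),
      show β l = ⨆ u : SG l, ENNReal.ofReal (u : ℝ) from
        vol_iSup (fun t ht => ht.2) (hSGdc l)]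
    rw [ENNReal.iSup_mul]
    refine iSup_le ?_
    rintro ⟨t, ht⟩
    rw [ENNReal.mul_iSup]
    refine iSup_le ?_
    rintro ⟨u, hu⟩
    have hmem : t * u ∈ SH l := by
      refine ⟨?_, (show (0:ℝ) < t * u from mul_pos ht.2 hu.2)⟩
      have hsub : (A ∩ {x | ENNReal.ofReal t ≤ φ x}) ∩ (A ∩ {x | ENNReal.ofReal u ≤ ψ x})
          ⊆ A ∩ {x | ENNReal.ofReal (t * u) ≤ φ x * ψ x} := by
        rintro x ⟨⟨hxA, hx1⟩, ⟨-, hx2⟩⟩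
        refine ⟨hxA, ?_⟩
        show ENNReal.ofReal (t * u) ≤ φ x * ψ x
        rw [ENNReal.ofReal_mul ht.2.le]
        exact mul_le_mul' hx1 hx2
      rcases hchain (ENNReal.ofReal t) (ENNReal.ofReal u) with hc | hc
      · have hss : (A ∩ {x | ENNReal.ofReal t ≤ φ x})
            ⊆ A ∩ {x | ENNReal.ofReal (t * u) ≤ φ x * ψ x} := fun x hx => hsub ⟨hx, hc hx⟩
        exact lt_of_lt_of_le ht.1 (hμmono _ _ (hBφ _) (hBφψ _) hss)
      · have hss : (A ∩ {x | ENNReal.ofReal u ≤ ψ x})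
            ⊆ A ∩ {x | ENNReal.ofReal (t * u) ≤ φ x * ψ x} := fun x hx => hsub ⟨hc hx, hx⟩
        exact lt_of_lt_of_le hu.1 (hμmono _ _ (hBψ _) (hBφψ _) hss)
    rw [← ENNReal.ofReal_mul ht.2.le, hSHvol]
    exact le_iSup (fun v : SH l => ENNReal.ofReal (v : ℝ)) ⟨t * u, hmem⟩
  have hCF : choquet μ φ A = ∫⁻ l in Set.Ioo 0 m, α l := by
    have h1 : choquet μ φ A = ∫⁻ l in Set.Ioi (0:ℝ), α l := layercake hFanti.measurable
    rw [h1, lintegral_Ioi_of_support hm0 hαsupp]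
  have hCG : choquet μ ψ A = ∫⁻ l in Set.Ioo 0 m, β l := by
    have h1 : choquet μ ψ A = ∫⁻ l in Set.Ioi (0:ℝ), β l := layercake hGanti.measurable
    rw [h1, lintegral_Ioi_of_support hm0 hβsupp]
  have hmono' : ∀ x y, α x * β y + α y * β x ≤ α x * β x + α y * β y := by
    intro x y
    rcases le_total x y with hxy | hxy
    · calc α x * β y + α y * β x = α y * β x + α x * β y := add_comm _ _
        _ ≤ α y * β y + α x * β x := enn_rearrange (hαanti hxy) (hβanti hxy)
        _ = α x * β x + α y * β y := add_comm _ _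
    · exact enn_rearrange (hαanti hxy) (hβanti hxy)
  have hνuniv : (volume.restrict (Set.Ioo 0 m)) Set.univ = μ A := by
    rw [Measure.restrict_apply_univ, Real.volume_Ioo, sub_zero, hmA]
  have hmain := cheb_core (ν := volume.restrict (Set.Ioo 0 m)) hαm hβm hmono'
  have hIαβ : ∫⁻ l in Set.Ioo 0 m, α l * β l ≤ choquet μ (fun x => φ x * ψ x) A := by
    calc ∫⁻ l in Set.Ioo 0 m, α l * β l ≤ ∫⁻ l in Set.Ioi 0, α l * β l :=
        lintegral_mono_set Set.Ioo_subset_Ioi_self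
      _ ≤ ∫⁻ l in Set.Ioi 0, γ l := lintegral_mono fun l => hkey l
      _ = choquet μ (fun x => φ x * ψ x) A := (layercake hHanti.measurable).symm
  calc choquet μ φ A * choquet μ ψ A
      = (∫⁻ l in Set.Ioo 0 m, α l) * (∫⁻ l in Set.Ioo 0 m, β l) := by rw [hCF, hCG]
    _ ≤ μ A * ∫⁻ l in Set.Ioo 0 m, α l * β l := by rw [← hνuniv]; exact hmain
    _ ≤ μ A * choquet μ (fun x => φ x * ψ x) A := mul_le_mul_right hIαβ _

end Choquet

section Jensen

variable {X : Type*} [MeasurableSpace X]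

/-- Jensen/power-mean inequality for the Choquet integral. -/
lemma choquet_jensen (μ : Set X → ℝ≥0∞)
    (hμmono : ∀ A B : Set X, MeasurableSet A → MeasurableSet B → A ⊆ B → μ A ≤ μ B)
    (φ : X → ℝ≥0∞) (hφ : Measurable φ) {p : ℝ} (hp : 1 ≤ p)
    (A : Set X) (hA : MeasurableSet A) (hA0 : 0 < μ A) (hAfin : μ A < ⊤) :
    choquet μ φ A ≤ (μ A) ^ (1 - 1/p) * (choquet μ (fun x => φ x ^ p) A) ^ (1/p) := by
  rcases eq_or_lt_of_le hp with rfl | hp1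
  · simp [ENNReal.rpow_one]
  have hp0 : 0 < p := lt_trans one_pos hp1
  set m := (μ A).toReal with hm
  have hm0 : 0 < m := ENNReal.toReal_pos hA0.ne' hAfin.ne
  have hmA : ENNReal.ofReal m = μ A := ENNReal.ofReal_toReal hAfin.ne
  set wF : ℝ → ℝ≥0∞ := fun t => μ (A ∩ {x | ENNReal.ofReal t ≤ φ x}) with hwF
  set wP : ℝ → ℝ≥0∞ := fun t => μ (A ∩ {x | ENNReal.ofReal t ≤ φ x ^ p}) with hwP
  have hφp : Measurable fun x => φ x ^ p := hφ.pow_const p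
  have hBφ : ∀ c : ℝ≥0∞, MeasurableSet (A ∩ {x | c ≤ φ x}) := fun c =>
    hA.inter (measurableSet_le measurable_const hφ)
  have hBP : ∀ c : ℝ≥0∞, MeasurableSet (A ∩ {x | c ≤ φ x ^ p}) := fun c =>
    hA.inter (measurableSet_le measurable_const hφp)
  have hFanti : Antitone wF := fun t1 t2 h =>
    hμmono _ _ (hBφ _) (hBφ _) (Set.inter_subset_inter_right _ fun x hx =>
      le_trans (ENNReal.ofReal_le_ofReal h) hx)
  have hPanti : Antitone wP := fun t1 t2 h =>
    hμmono _ _ (hBP _) (hBP _) (Set.inter_subset_inter_right _ fun x hx =>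
      le_trans (ENNReal.ofReal_le_ofReal h) hx)
  have hFle : ∀ t, wF t ≤ μ A := fun t => hμmono _ _ (hBφ _) hA Set.inter_subset_left
  set SF : ℝ → Set ℝ := fun l => {t | ENNReal.ofReal l < wF t} ∩ Set.Ioi 0 with hSF
  set SP : ℝ → Set ℝ := fun l => {t | ENNReal.ofReal l < wP t} ∩ Set.Ioi 0 with hSP
  set α : ℝ → ℝ≥0∞ := fun l => volume (SF l) with hαdef
  set δ : ℝ → ℝ≥0∞ := fun l => volume (SP l) with hδdef
  have hSFdc : ∀ l, ∀ t ∈ SF l, ∀ u : ℝ, 0 < u → u < t → u ∈ SF l :=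
    fun l t ht u hu0 hut => ⟨lt_of_lt_of_le ht.1 (hFanti hut.le), hu0⟩
  have hαanti : Antitone α := fun l1 l2 h =>
    measure_mono fun t ht => ⟨lt_of_le_of_lt (ENNReal.ofReal_le_ofReal h) ht.1, ht.2⟩
  have hαm : Measurable α := hαanti.measurable
  have hαsupp : ∀ l, m ≤ l → α l = 0 := by
    intro l hl
    have hμle : μ A ≤ ENNReal.ofReal l := by rw [← hmA]; exact ENNReal.ofReal_le_ofReal hl
    have hempty : SF l = ∅ := Set.eq_empty_of_forall_notMem fun t ht =>
      ht.1.not_ge ((hFle t).trans hμle)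
    show volume (SF l) = 0
    rw [hempty, measure_empty]
  -- key pointwise bound : α l ^ p ≤ δ l
  have hkey : ∀ l, α l ^ p ≤ δ l := by
    intro l
    have hmem : ∀ t ∈ SF l, t ^ p ∈ SP l := by
      intro t ht
      refine ⟨?_, Real.rpow_pos_of_pos ht.2 p⟩
      have hss : (A ∩ {x | ENNReal.ofReal t ≤ φ x})
          ⊆ A ∩ {x | ENNReal.ofReal (t ^ p) ≤ φ x ^ p} := by
        rintro x ⟨hxA, hx⟩
        refine ⟨hxA, ?_⟩
        show ENNReal.ofReal (t ^ p) ≤ φ x ^ p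
        rw [← ENNReal.ofReal_rpow_of_pos ht.2]
        exact ENNReal.rpow_le_rpow hx hp0.le
      exact lt_of_lt_of_le ht.1 (hμmono _ _ (hBφ _) (hBP _) hss)
    have hδbd : ∀ t ∈ SF l, ENNReal.ofReal (t ^ p) ≤ δ l := by
      intro t ht
      rw [show δ l = ⨆ v : SP l, ENNReal.ofReal (v : ℝ) from
        vol_iSup (fun t ht => ht.2) (fun t ht u hu0 hut =>
          ⟨lt_of_lt_of_le ht.1 (hPanti hut.le), hu0⟩)]
      exact le_iSup (fun v : SP l => ENNReal.ofReal (v : ℝ)) ⟨t ^ p, hmem t ht⟩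
    have hsup : α l ≤ δ l ^ (1/p) := by
      rw [show α l = ⨆ t : SF l, ENNReal.ofReal (t : ℝ) from
        vol_iSup (fun t ht => ht.2) (hSFdc l)]
      refine iSup_le ?_
      rintro ⟨t, ht⟩
      have h1 : (ENNReal.ofReal (t ^ p)) ^ (1/p) ≤ δ l ^ (1/p) :=
        ENNReal.rpow_le_rpow (hδbd t ht) (by positivity)
      calc ENNReal.ofReal t = (ENNReal.ofReal (t ^ p)) ^ (1/p) := by
            rw [← ENNReal.ofReal_rpow_of_pos ht.2, ← ENNReal.rpow_mul,
              mul_one_div_cancel hp0.ne', ENNReal.rpow_one]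
        _ ≤ δ l ^ (1/p) := h1
    calc α l ^ p ≤ (δ l ^ (1/p)) ^ p := ENNReal.rpow_le_rpow hsup hp0.le
      _ = δ l := by rw [← ENNReal.rpow_mul, one_div_mul_cancel hp0.ne', ENNReal.rpow_one]
  -- integral representations
  have hCF : choquet μ φ A = ∫⁻ l in Set.Ioo 0 m, α l := by
    have h1 : choquet μ φ A = ∫⁻ l in Set.Ioi (0:ℝ), α l := layercake hFanti.measurable
    rw [h1, lintegral_Ioi_of_support hm0 hαsupp]
  have hCP : ∫⁻ l in Set.Ioi (0:ℝ), δ l = choquet μ (fun x => φ x ^ p) A :=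
    (layercake hPanti.measurable).symm
  -- Hölder
  set ν := volume.restrict (Set.Ioo 0 m) with hν
  have hνuniv : ν Set.univ = μ A := by
    rw [hν, Measure.restrict_apply_univ, Real.volume_Ioo, sub_zero, hmA]
  have hconj : p.HolderConjugate (Real.conjExponent p) := Real.HolderConjugate.conjExponent hp1
  have hold := ENNReal.lintegral_mul_le_Lp_mul_Lq ν hconj hαm.aemeasurable
    (aemeasurable_const (b := (1:ℝ≥0∞)))
  simp only [Pi.mul_apply, mul_one, ENNReal.one_rpow, lintegral_const, one_mul] at hold
  have hexp : 1 / Real.conjExponent p = 1 - 1/p := by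
    rw [Real.conjExponent, one_div_div]
    field_simp
  rw [hνuniv, hexp] at hold
  have hδint : ∫⁻ l, α l ^ p ∂ν ≤ choquet μ (fun x => φ x ^ p) A := by
    calc ∫⁻ l, α l ^ p ∂ν ≤ ∫⁻ l in Set.Ioi 0, α l ^ p :=
        lintegral_mono_set Set.Ioo_subset_Ioi_self
      _ ≤ ∫⁻ l in Set.Ioi 0, δ l := lintegral_mono fun l => hkey l
      _ = choquet μ (fun x => φ x ^ p) A := hCP
  calc choquet μ φ A = ∫⁻ l, α l ∂ν := hCF
    _ ≤ (∫⁻ l, α l ^ p ∂ν) ^ (1/p) * (μ A) ^ (1 - 1/p) := hold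
    _ ≤ (choquet μ (fun x => φ x ^ p) A) ^ (1/p) * (μ A) ^ (1 - 1/p) :=
        mul_le_mul_left (ENNReal.rpow_le_rpow hδint (by positivity)) _
    _ = (μ A) ^ (1 - 1/p) * (choquet μ (fun x => φ x ^ p) A) ^ (1/p) := mul_comm _ _

end Jensen

/-- Comonotone functions have nested level sets. -/
lemma comonotone_chain {X : Type*} {f g : X → ℝ≥0} (hfg : Comonotone f g) (A : Set X) :
    ∀ a b : ℝ≥0∞, (A ∩ {x | a ≤ (f x : ℝ≥0∞)} ⊆ A ∩ {x | b ≤ (g x : ℝ≥0∞)}) ∨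
      (A ∩ {x | b ≤ (g x : ℝ≥0∞)} ⊆ A ∩ {x | a ≤ (f x : ℝ≥0∞)}) := by
  intro a b
  by_contra hcon
  push_neg at hcon
  obtain ⟨h1, h2⟩ := hcon
  rw [Set.not_subset] at h1 h2
  obtain ⟨x, ⟨hxA, hxf⟩, hx2⟩ := h1
  obtain ⟨y, ⟨hyA, hyg⟩, hy2⟩ := h2
  have hgx : (g x : ℝ≥0∞) < b := by
    by_contra hgx
    exact hx2 ⟨hxA, not_lt.mp hgx⟩
  have hfy : (f y : ℝ≥0∞) < a := by
    by_contra hfy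
    exact hy2 ⟨hyA, not_lt.mp hfy⟩
  have h1' : (f y : ℝ) < (f x : ℝ) := by
    have := lt_of_lt_of_le hfy hxf
    exact_mod_cast this
  have h2' : (g x : ℝ) < (g y : ℝ) := by
    have := lt_of_lt_of_le hgx hyg
    exact_mod_cast this
  have := hfg x y
  nlinarith

/-- Carlson type inequality for the Choquet integral of comonotone functions. -/
theorem carlson_choquet {X : Type*} [MeasurableSpace X]
    -- μ : F → [0,∞] is a monotone measure
    (μ : Set X → ℝ≥0∞)
    (hμ0 : μ ∅ = 0) (hμX : 0 < μ Set.univ)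
    (hμmono : ∀ A B : Set X, MeasurableSet A → MeasurableSet B → A ⊆ B → μ A ≤ μ B)
    -- p, q ≥ 1 and r, s > 0
    (p q r s : ℝ) (hp : 1 ≤ p) (hq : 1 ≤ q) (hr : 0 < r) (hs : 0 < s)
    -- f, g, h : X → [0,∞) measurable, f, g comonotone and f, h comonotone
    (f g h : X → ℝ≥0) (hf : Measurable f) (hg : Measurable g) (hh : Measurable h)
    (hfg : Comonotone f g) (hfh : Comonotone f h)
    -- A ∈ F with 0 < μ(A) < ∞, and f integrable on A
    (A : Set X) (hA : MeasurableSet A) (hA0 : 0 < μ A) (hAfin : μ A < ∞)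
    (hfint : choquet μ (fun x => (f x : ℝ≥0∞)) A < ∞) :
    choquet μ (fun x => (f x : ℝ≥0∞)) A *
      (choquet μ (fun x => (g x : ℝ≥0∞)) A) ^ (r/(r+s)) *
      (choquet μ (fun x => (h x : ℝ≥0∞)) A) ^ (s/(r+s)) ≤
    (μ A) ^ (2 - (1/(r+s)) * (r/p + s/q)) *
      (choquet μ (fun x => (f x : ℝ≥0∞) ^ p * (g x : ℝ≥0∞) ^ p) A) ^ (r/(p*(r+s))) *
      (choquet μ (fun x => (f x : ℝ≥0∞) ^ q * (h x : ℝ≥0∞) ^ q) A) ^ (s/(q*(r+s))) := by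
  have hφ : Measurable fun x => (f x : ℝ≥0∞) := hf.coe_nnreal_ennreal
  have hψ : Measurable fun x => (g x : ℝ≥0∞) := hg.coe_nnreal_ennreal
  have hχ : Measurable fun x => (h x : ℝ≥0∞) := hh.coe_nnreal_ennreal
  have hp0 : (0:ℝ) < p := lt_of_lt_of_le one_pos hp
  have hq0 : (0:ℝ) < q := lt_of_lt_of_le one_pos hq
  have hrs : (0:ℝ) < r + s := add_pos hr hs
  set Cf := choquet μ (fun x => (f x : ℝ≥0∞)) A with hCf
  set Cg := choquet μ (fun x => (g x : ℝ≥0∞)) A with hCg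
  set Ch := choquet μ (fun x => (h x : ℝ≥0∞)) A with hCh
  set C1 := choquet μ (fun x => (f x : ℝ≥0∞) ^ p * (g x : ℝ≥0∞) ^ p) A with hC1
  set C2 := choquet μ (fun x => (f x : ℝ≥0∞) ^ q * (h x : ℝ≥0∞) ^ q) A with hC2
  -- Step 1 : Cf * Cg ≤ μ A ^ (2 - 1/p) * C1 ^ (1/p)
  have step1 : Cf * Cg ≤ μ A ^ (2 - 1/p) * C1 ^ (1/p) := by
    have c1 := choquet_cheb μ hμmono _ _ hφ hψ A hA hA0 hAfin (comonotone_chain hfg A)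
    have j1 := choquet_jensen μ hμmono (fun x => (f x : ℝ≥0∞) * (g x : ℝ≥0∞))
      (hφ.mul hψ) hp A hA hA0 hAfin
    have hfun : (fun x => ((f x : ℝ≥0∞) * (g x : ℝ≥0∞)) ^ p)
        = fun x => (f x : ℝ≥0∞) ^ p * (g x : ℝ≥0∞) ^ p :=
      funext fun x => ENNReal.mul_rpow_of_nonneg _ _ hp0.le
    rw [hfun] at j1
    calc Cf * Cg ≤ μ A * choquet μ (fun x => (f x : ℝ≥0∞) * (g x : ℝ≥0∞)) A := c1
      _ ≤ μ A * (μ A ^ (1 - 1/p) * C1 ^ (1/p)) := mul_le_mul_right j1 _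
      _ = μ A ^ (2 - 1/p) * C1 ^ (1/p) := by
          rw [← mul_assoc]
          congr 1
          have h2 : (2 - 1/p : ℝ) = 1 + (1 - 1/p) := by ring
          rw [h2, ENNReal.rpow_add _ _ hA0.ne' hAfin.ne, ENNReal.rpow_one]
  have step2 : Cf * Ch ≤ μ A ^ (2 - 1/q) * C2 ^ (1/q) := by
    have c1 := choquet_cheb μ hμmono _ _ hφ hχ A hA hA0 hAfin (comonotone_chain hfh A)
    have j1 := choquet_jensen μ hμmono (fun x => (f x : ℝ≥0∞) * (h x : ℝ≥0∞))
      (hφ.mul hχ) hq A hA hA0 hAfin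
    have hfun : (fun x => ((f x : ℝ≥0∞) * (h x : ℝ≥0∞)) ^ q)
        = fun x => (f x : ℝ≥0∞) ^ q * (h x : ℝ≥0∞) ^ q :=
      funext fun x => ENNReal.mul_rpow_of_nonneg _ _ hq0.le
    rw [hfun] at j1
    calc Cf * Ch ≤ μ A * choquet μ (fun x => (f x : ℝ≥0∞) * (h x : ℝ≥0∞)) A := c1
      _ ≤ μ A * (μ A ^ (1 - 1/q) * C2 ^ (1/q)) := mul_le_mul_right j1 _
      _ = μ A ^ (2 - 1/q) * C2 ^ (1/q) := by
          rw [← mul_assoc]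
          congr 1
          have h2 : (2 - 1/q : ℝ) = 1 + (1 - 1/q) := by ring
          rw [h2, ENNReal.rpow_add _ _ hA0.ne' hAfin.ne, ENNReal.rpow_one]
  -- trivial case
  rcases eq_or_ne Cf 0 with hCf0 | hCf0
  · rw [hCf0, zero_mul, zero_mul]
    exact zero_le
  have hCftop : Cf ≠ ⊤ := hfint.ne
  have hθ0 : (0:ℝ) ≤ r/(r+s) := by positivity
  have hθ'0 : (0:ℝ) ≤ s/(r+s) := by positivity
  have hLHS : Cf * Cg ^ (r/(r+s)) * Ch ^ (s/(r+s))
      = (Cf * Cg) ^ (r/(r+s)) * (Cf * Ch) ^ (s/(r+s)) := by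
    rw [ENNReal.mul_rpow_of_nonneg _ _ hθ0, ENNReal.mul_rpow_of_nonneg _ _ hθ'0]
    have hre : Cf ^ (r/(r+s)) * Cg ^ (r/(r+s)) * (Cf ^ (s/(r+s)) * Ch ^ (s/(r+s)))
        = Cf ^ (r/(r+s)) * Cf ^ (s/(r+s)) * Cg ^ (r/(r+s)) * Ch ^ (s/(r+s)) := by ring
    rw [hre, ← ENNReal.rpow_add _ _ hCf0 hCftop,
      show r/(r+s) + s/(r+s) = 1 by field_simp, ENNReal.rpow_one]
  calc Cf * Cg ^ (r/(r+s)) * Ch ^ (s/(r+s))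
      = (Cf * Cg) ^ (r/(r+s)) * (Cf * Ch) ^ (s/(r+s)) := hLHS
    _ ≤ (μ A ^ (2 - 1/p) * C1 ^ (1/p)) ^ (r/(r+s))
        * (μ A ^ (2 - 1/q) * C2 ^ (1/q)) ^ (s/(r+s)) :=
        mul_le_mul' (ENNReal.rpow_le_rpow step1 hθ0) (ENNReal.rpow_le_rpow step2 hθ'0)
    _ = μ A ^ (2 - (1/(r+s)) * (r/p + s/q)) * C1 ^ (r/(p*(r+s))) * C2 ^ (s/(q*(r+s))) := by
        rw [ENNReal.mul_rpow_of_nonneg _ _ hθ0, ENNReal.mul_rpow_of_nonneg _ _ hθ'0,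
          ← ENNReal.rpow_mul, ← ENNReal.rpow_mul, ← ENNReal.rpow_mul, ← ENNReal.rpow_mul,
          mul_mul_mul_comm, ← ENNReal.rpow_add _ _ hA0.ne' hAfin.ne, ← mul_assoc]
        rw [show (2 - 1/p) * (r/(r+s)) + (2 - 1/q) * (s/(r+s))
            = 2 - (1/(r+s)) * (r/p + s/q) by field_simp; ring,
          show (1/p) * (r/(r+s)) = r/(p*(r+s)) by rw [div_mul_div_comm, one_mul],
          show (1/q) * (s/(r+s)) = s/(q*(r+s)) by rw [div_mul_div_comm, one_mul]]
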